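/- The isomorphism relation on countable linear orders is Borel reducible to the conjugacy relation on Aut(ℚ). Precisely: code linear orders on ℕ as elements of the Polish space (ℕ × ℕ) → Bool (with Bool discrete and the product topology), letting LO denote the set of codes R that define a linear order on ℕ, and code maps ℚ → ℚ as elements of the Polish space ℚ → ℚ (with ℚ discrete and the product topology). Then there exists a Borel-measurable function f from (ℕ × ℕ) → Bool to ℚ → ℚ such that for every R ∈ LO, f(R) is an order automorphism of ℚ, and for all R, S ∈ LO: (ℕ, R) is order-isomorphic to (ℕ, S) if and only if there exists an order automorphism β of ℚ with β ∘ f(R) = f(S) ∘ β. -/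

import Mathlib

set_option maxHeartbeats 1000000

namespace Stmt9

abbrev Code := (ℕ × ℕ) → Bool

def LO (R : Code) : Prop := IsLinearOrder ℕ (fun m n => R (m, n) = true)

def e : ℚ ≃ ℕ × ℚ := (Denumerable.eqv ℚ).trans (Denumerable.eqv (ℕ × ℚ)).symm

def pt (n : ℕ) (b : ℚ) : ℚ := e.symm (n, b)

def pleB (R : Code) (q q' : ℚ) : Bool :=
  if (e q).1 = (e q').1 then decide ((e q).2 ≤ (e q').2) else R ((e q).1, (e q').1)

def tau (q : ℚ) : ℚ := e.symm ((e q).1, (e q).2 + 1)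
def taui (q : ℚ) : ℚ := e.symm ((e q).1, (e q).2 - 1)

def d (n : ℕ) : ℚ := (Encodable.decode n).getD 0
def enc (q : ℚ) : ℕ := Encodable.encode q

@[simp] lemma d_enc (q : ℚ) : d (enc q) = q := by
  simp [d, enc, Encodable.encodek]

@[simp] lemma e_pt (n : ℕ) (b : ℚ) : e (pt n b) = (n, b) := e.apply_symm_apply _
@[simp] lemma e_tau (q : ℚ) : e (tau q) = ((e q).1, (e q).2 + 1) := e.apply_symm_apply _
@[simp] lemma e_taui (q : ℚ) : e (taui q) = ((e q).1, (e q).2 - 1) := e.apply_symm_apply _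

@[simp] lemma taui_tau (q : ℚ) : taui (tau q) = q := by
  simp [taui, tau]
@[simp] lemma tau_taui (q : ℚ) : tau (taui q) = q := by
  simp [taui, tau]

lemma tau_injective : Function.Injective tau := by
  intro a b h
  have := congrArg taui h; simpa using this

section LOfacts
variable {R : Code}

lemma Rrefl (hR : LO R) (n : ℕ) : R (n, n) = true := by
  haveI : IsLinearOrder ℕ (fun m n => R (m, n) = true) := hR
  exact _root_.refl_of (fun m n => R (m, n) = true) n

lemma Rtrans (hR : LO R) {a b c : ℕ} (h1 : R (a, b) = true) (h2 : R (b, c) = true) :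
    R (a, c) = true := by
  haveI : IsLinearOrder ℕ (fun m n => R (m, n) = true) := hR
  exact _root_.trans_of (fun m n => R (m, n) = true) h1 h2

lemma Rantisymm (hR : LO R) {a b : ℕ} (h1 : R (a, b) = true) (h2 : R (b, a) = true) :
    a = b := by
  haveI : IsLinearOrder ℕ (fun m n => R (m, n) = true) := hR
  exact _root_.antisymm_of (fun m n => R (m, n) = true) h1 h2

lemma Rtotal (hR : LO R) (a b : ℕ) : R (a, b) = true ∨ R (b, a) = true := by
  haveI : IsLinearOrder ℕ (fun m n => R (m, n) = true) := hR
  exact _root_.total_of (fun m n => R (m, n) = true) a b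

lemma ple_refl (q : ℚ) : pleB R q q = true := by
  simp [pleB]

lemma ple_trans (hR : LO R) {a b c : ℚ} (h1 : pleB R a b = true) (h2 : pleB R b c = true) :
    pleB R a c = true := by
  unfold pleB at h1 h2 ⊢
  rcases eq_or_ne (e a).1 (e b).1 with hab | hab <;>
    rcases eq_or_ne (e b).1 (e c).1 with hbc | hbc
  · rw [if_pos hab] at h1; rw [if_pos hbc] at h2
    rw [if_pos (hab.trans hbc)]
    simp at h1 h2 ⊢; exact le_trans h1 h2
  · have hac : (e a).1 ≠ (e c).1 := hab ▸ hbc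
    rw [if_neg hbc] at h2
    rw [if_neg hac, hab]; exact h2
  · have hac : (e a).1 ≠ (e c).1 := hbc ▸ hab
    rw [if_neg hab] at h1
    rw [if_neg hac, ← hbc]; exact h1
  · rw [if_neg hab] at h1; rw [if_neg hbc] at h2
    have h3 := Rtrans hR h1 h2
    have hac : (e a).1 ≠ (e c).1 := by
      intro h
      exact hab (Rantisymm hR h1 (h ▸ h2))
    rw [if_neg hac]; exact h3

lemma ple_antisymm (hR : LO R) {a b : ℚ} (h1 : pleB R a b = true) (h2 : pleB R b a = true) :
    a = b := by
  unfold pleB at h1 h2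
  rcases eq_or_ne (e a).1 (e b).1 with hab | hab
  · rw [if_pos hab] at h1; rw [if_pos hab.symm] at h2
    simp at h1 h2
    have : e a = e b := Prod.ext hab (le_antisymm h1 h2)
    exact e.injective this
  · rw [if_neg hab] at h1; rw [if_neg (Ne.symm hab)] at h2
    exact absurd (Rantisymm hR h1 h2) hab

lemma ple_total (hR : LO R) (a b : ℚ) : pleB R a b = true ∨ pleB R b a = true := by
  unfold pleB
  rcases eq_or_ne (e a).1 (e b).1 with hab | hab
  · rw [if_pos hab, if_pos hab.symm]
    simp [le_total]
  · rw [if_neg hab, if_neg (Ne.symm hab)]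
    exact Rtotal hR _ _

/-- strict version -/
def sltB (R : Code) (a b : ℚ) : Prop := pleB R a b = true ∧ a ≠ b

lemma slt_of_ple_slt (hR : LO R) {a b c : ℚ} (h1 : pleB R a b = true) (h2 : sltB R b c) :
    sltB R a c := by
  refine ⟨ple_trans hR h1 h2.1, fun h => h2.2 ?_⟩
  subst h
  exact ple_antisymm hR h2.1 h1

lemma slt_of_slt_ple (hR : LO R) {a b c : ℚ} (h1 : sltB R a b) (h2 : pleB R b c = true) :
    sltB R a c := by
  refine ⟨ple_trans hR h1.1 h2, fun h => h1.2 ?_⟩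
  subst h
  exact ple_antisymm hR h1.1 h2

lemma ple_pt_iff (n : ℕ) {b c : ℚ} : pleB R (pt n b) (pt n c) = true ↔ b ≤ c := by
  simp [pleB]

lemma slt_self_tau (q : ℚ) : sltB R q (tau q) := by
  constructor
  · simp [pleB]
  · intro h
    have := congrArg (fun x => (e x).2) h
    simp at this

lemma slt_taui_self (q : ℚ) : sltB R (taui q) q := by
  constructor
  · simp [pleB]
  · intro h
    have := congrArg (fun x => (e x).2) h
    simp at this

lemma ple_tau_iff {a b : ℚ} : pleB R (tau a) (tau b) = true ↔ pleB R a b = true := by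
  simp [pleB]

lemma slt_dense (hR : LO R) {a b : ℚ} (h : sltB R a b) : ∃ c, sltB R a c ∧ sltB R c b := by
  rcases eq_or_ne (e a).1 (e b).1 with hab | hab
  · -- same fiber, use rational density
    have h1 : (e a).2 < (e b).2 := by
      rcases h with ⟨h1, h2⟩
      unfold pleB at h1; rw [if_pos hab] at h1; simp at h1
      rcases lt_or_eq_of_le h1 with h | h
      · exact h
      · exact absurd (e.injective (Prod.ext hab h)) h2
    obtain ⟨m, hm1, hm2⟩ := exists_between h1
    refine ⟨pt (e a).1 m, ⟨?_, ?_⟩, ⟨?_, ?_⟩⟩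
    · unfold pleB; simp [le_of_lt hm1]
    · intro hh
      have := congrArg (fun x => (e x).2) hh
      simp [pt] at this
      rw [← this] at hm1; simp at hm1
    · unfold pleB; simp [hab, le_of_lt hm2]
    · intro hh
      have := congrArg (fun x => (e x).2) hh
      simp [pt] at this
      rw [this] at hm2; simp at hm2
  · -- different fibers: insert tau a
    refine ⟨tau a, slt_self_tau a, ?_, ?_⟩
    · rcases h with ⟨h1, _⟩
      unfold pleB at h1 ⊢; rw [if_neg hab] at h1
      simp only [e_tau]
      rw [if_neg hab]; exact h1
    · intro hh
      have := congrArg (fun x => (e x).1) hh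
      simp at this
      exact hab this

end LOfacts

def okF (R : Code) (l : List (ℚ × ℚ)) (a : ℚ) (n : ℕ) : Bool :=
  l.all fun p => (decide (p.1 ≤ a) == pleB R p.2 (d n)) && (decide (a ≤ p.1) == pleB R (d n) p.2)

def okB (R : Code) (l : List (ℚ × ℚ)) (b : ℚ) (n : ℕ) : Bool :=
  l.all fun p => (decide (p.1 ≤ d n) == pleB R p.2 b) && (decide (d n ≤ p.1) == pleB R b p.2)

section BackForth

open Classical in
noncomputable def forthN (R : Code) (l : List (ℚ × ℚ)) (a : ℚ) : ℕ :=
  if h : ∃ n, okF R l a n = true then Nat.find h else 0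

open Classical in
noncomputable def backN (R : Code) (l : List (ℚ × ℚ)) (b : ℚ) : ℕ :=
  if h : ∃ n, okB R l b n = true then Nat.find h else 0

def pureStep (k : ℕ) (l : List (ℚ × ℚ)) (i j : ℕ) : List (ℚ × ℚ) :=
  if k % 2 = 0 then
    (if d (k / 2) ∈ l.map Prod.fst then l else (d (k / 2), d i) :: l)
  else
    (if d (k / 2) ∈ l.map Prod.snd then l else (d j, d (k / 2)) :: l)

noncomputable def step (R : Code) (k : ℕ) (l : List (ℚ × ℚ)) : List (ℚ × ℚ) :=
  pureStep k l (forthN R l (d (k / 2))) (backN R l (d (k / 2)))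

noncomputable def stage (R : Code) : ℕ → List (ℚ × ℚ)
  | 0 => []
  | k + 1 => step R k (stage R k)

def good (R : Code) (l : List (ℚ × ℚ)) : Prop :=
  ∀ p ∈ l, ∀ p' ∈ l, (p.1 ≤ p'.1 ↔ pleB R p.2 p'.2 = true)

lemma decide_eq_iff {P : Prop} [Decidable P] {b : Bool} : decide P = b ↔ (P ↔ b = true) := by
  cases b <;> simp

lemma okF_iff {R : Code} {l : List (ℚ × ℚ)} {a : ℚ} {n : ℕ} :
    okF R l a n = true ↔
      ∀ p ∈ l, (p.1 ≤ a ↔ pleB R p.2 (d n) = true) ∧ (a ≤ p.1 ↔ pleB R (d n) p.2 = true) := by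
  simp only [okF, List.all_eq_true, Bool.and_eq_true, beq_iff_eq, decide_eq_iff]

lemma okB_iff {R : Code} {l : List (ℚ × ℚ)} {b : ℚ} {n : ℕ} :
    okB R l b n = true ↔
      ∀ p ∈ l, (p.1 ≤ d n ↔ pleB R p.2 b = true) ∧ (d n ≤ p.1 ↔ pleB R b p.2 = true) := by
  simp only [okB, List.all_eq_true, Bool.and_eq_true, beq_iff_eq, decide_eq_iff]

variable {R : Code}

lemma exists_forth (hR : LO R) {l : List (ℚ × ℚ)} (hg : good R l) {a : ℚ}
    (ha : a ∉ l.map Prod.fst) : ∃ n, okF R l a n = true := by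
  suffices h : ∃ r : ℚ, ∀ p ∈ l, (p.1 < a → sltB R p.2 r) ∧ (a < p.1 → sltB R r p.2) by
    obtain ⟨r, hr⟩ := h
    refine ⟨enc r, okF_iff.2 fun p hp => ?_⟩
    rw [d_enc]
    have hne : p.1 ≠ a := fun h => ha (List.mem_map.2 ⟨p, hp, h⟩)
    rcases lt_or_gt_of_ne hne with h | h
    · have h1 := (hr p hp).1 h
      exact ⟨⟨fun _ => h1.1, fun _ => le_of_lt h⟩,
        ⟨fun hh => absurd hh (not_le.2 h),
         fun hh => absurd (ple_antisymm hR hh h1.1).symm h1.2⟩⟩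
    · have h1 := (hr p hp).2 h
      exact ⟨⟨fun hh => absurd hh (not_le.2 h),
         fun hh => absurd (ple_antisymm hR h1.1 hh) h1.2⟩,
        ⟨fun _ => h1.1, fun _ => le_of_lt h⟩⟩
  classical
  set lw := l.filter (fun p => decide (p.1 < a)) with hlwdef
  set up := l.filter (fun p => decide (a < p.1)) with hupdef
  have hmemlw : ∀ p, p ∈ lw ↔ p ∈ l ∧ p.1 < a := by
    intro p; simp [hlwdef, List.mem_filter]
  have hmemup : ∀ p, p ∈ up ↔ p ∈ l ∧ a < p.1 := by
    intro p; simp [hupdef, List.mem_filter]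
  by_cases hlw : lw = [] <;> by_cases hup : up = []
  · refine ⟨0, fun p hp => ⟨fun h => ?_, fun h => ?_⟩⟩
    · exact absurd ((hmemlw p).2 ⟨hp, h⟩) (by simp [hlw])
    · exact absurd ((hmemup p).2 ⟨hp, h⟩) (by simp [hup])
  · -- lw empty, up nonempty : go below the minimum
    obtain ⟨p1, hp1⟩ := List.exists_mem_of_ne_nil up hup
    obtain ⟨q1, hq1mem, hq1min⟩ :=
      Finset.exists_min_image up.toFinset Prod.fst ⟨p1, List.mem_toFinset.2 hp1⟩
    rw [List.mem_toFinset] at hq1mem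
    refine ⟨taui q1.2, fun p hp => ⟨fun h => ?_, fun h => ?_⟩⟩
    · exact absurd ((hmemlw p).2 ⟨hp, h⟩) (by simp [hlw])
    · have hpu : p ∈ up := (hmemup p).2 ⟨hp, h⟩
      have hle : q1.1 ≤ p.1 := hq1min p (List.mem_toFinset.2 hpu)
      have hple : pleB R q1.2 p.2 = true :=
        (hg q1 ((hmemup q1).1 hq1mem).1 p hp).1 hle
      exact slt_of_slt_ple hR (slt_taui_self q1.2) hple
  · -- up empty, lw nonempty : go above the maximum
    obtain ⟨p0, hp0⟩ := List.exists_mem_of_ne_nil lw hlw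
    obtain ⟨q0, hq0mem, hq0max⟩ :=
      Finset.exists_max_image lw.toFinset Prod.fst ⟨p0, List.mem_toFinset.2 hp0⟩
    rw [List.mem_toFinset] at hq0mem
    refine ⟨tau q0.2, fun p hp => ⟨fun h => ?_, fun h => ?_⟩⟩
    · have hpl : p ∈ lw := (hmemlw p).2 ⟨hp, h⟩
      have hle : p.1 ≤ q0.1 := hq0max p (List.mem_toFinset.2 hpl)
      have hple : pleB R p.2 q0.2 = true :=
        (hg p hp q0 ((hmemlw q0).1 hq0mem).1).1 hle
      exact slt_of_ple_slt hR hple (slt_self_tau q0.2)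
    · exact absurd ((hmemup p).2 ⟨hp, h⟩) (by simp [hup])
  · -- both nonempty : use density
    obtain ⟨p0, hp0⟩ := List.exists_mem_of_ne_nil lw hlw
    obtain ⟨q0, hq0mem, hq0max⟩ :=
      Finset.exists_max_image lw.toFinset Prod.fst ⟨p0, List.mem_toFinset.2 hp0⟩
    rw [List.mem_toFinset] at hq0mem
    obtain ⟨p1, hp1⟩ := List.exists_mem_of_ne_nil up hup
    obtain ⟨q1, hq1mem, hq1min⟩ :=
      Finset.exists_min_image up.toFinset Prod.fst ⟨p1, List.mem_toFinset.2 hp1⟩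
    rw [List.mem_toFinset] at hq1mem
    have hq0l : q0 ∈ l ∧ q0.1 < a := (hmemlw q0).1 hq0mem
    have hq1l : q1 ∈ l ∧ a < q1.1 := (hmemup q1).1 hq1mem
    have hlt : q0.1 < q1.1 := lt_trans hq0l.2 hq1l.2
    have hslt : sltB R q0.2 q1.2 := by
      refine ⟨(hg q0 hq0l.1 q1 hq1l.1).1 (le_of_lt hlt), fun h => ?_⟩
      have : q1.1 ≤ q0.1 := (hg q1 hq1l.1 q0 hq0l.1).2 (by rw [h]; exact ple_refl q1.2)
      exact absurd hlt (not_lt.2 this)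
    obtain ⟨r, hr0, hr1⟩ := slt_dense hR hslt
    refine ⟨r, fun p hp => ⟨fun h => ?_, fun h => ?_⟩⟩
    · have hpl : p ∈ lw := (hmemlw p).2 ⟨hp, h⟩
      have hle : p.1 ≤ q0.1 := hq0max p (List.mem_toFinset.2 hpl)
      exact slt_of_ple_slt hR ((hg p hp q0 hq0l.1).1 hle) hr0
    · have hpu : p ∈ up := (hmemup p).2 ⟨hp, h⟩
      have hle : q1.1 ≤ p.1 := hq1min p (List.mem_toFinset.2 hpu)
      exact slt_of_slt_ple hR hr1 ((hg q1 hq1l.1 p hp).1 hle)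

end BackForth

instance (R : Code) (a b : ℚ) : Decidable (sltB R a b) := by unfold sltB; infer_instance

lemma exists_back (hR : LO R) {l : List (ℚ × ℚ)} (hg : good R l) {b : ℚ}
    (hb : b ∉ l.map Prod.snd) : ∃ n, okB R l b n = true := by
  suffices h : ∃ q : ℚ, ∀ p ∈ l, (sltB R p.2 b → p.1 < q) ∧ (sltB R b p.2 → q < p.1) by
    obtain ⟨q, hq⟩ := h
    refine ⟨enc q, okB_iff.2 fun p hp => ?_⟩
    rw [d_enc]
    have hne : p.2 ≠ b := fun h => hb (List.mem_map.2 ⟨p, hp, h⟩)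
    have htri : sltB R p.2 b ∨ sltB R b p.2 := by
      rcases ple_total hR p.2 b with h | h
      · exact Or.inl ⟨h, hne⟩
      · exact Or.inr ⟨h, Ne.symm hne⟩
    rcases htri with h | h
    · have h1 := (hq p hp).1 h
      exact ⟨⟨fun _ => h.1, fun _ => le_of_lt h1⟩,
        ⟨fun hh => absurd hh (not_le.2 h1),
         fun hh => absurd (ple_antisymm hR h.1 hh) hne⟩⟩
    · have h1 := (hq p hp).2 h
      exact ⟨⟨fun hh => absurd hh (not_le.2 h1),
         fun hh => absurd (ple_antisymm hR hh h.1) hne⟩,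
        ⟨fun _ => h.1, fun _ => le_of_lt h1⟩⟩
  classical
  set lw := l.filter (fun p => decide (sltB R p.2 b)) with hlwdef
  set up := l.filter (fun p => decide (sltB R b p.2)) with hupdef
  have hmemlw : ∀ p, p ∈ lw ↔ p ∈ l ∧ sltB R p.2 b := by
    intro p; simp [hlwdef, List.mem_filter]
  have hmemup : ∀ p, p ∈ up ↔ p ∈ l ∧ sltB R b p.2 := by
    intro p; simp [hupdef, List.mem_filter]
  by_cases hlw : lw = [] <;> by_cases hup : up = []
  · refine ⟨0, fun p hp => ⟨fun h => ?_, fun h => ?_⟩⟩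
    · exact absurd ((hmemlw p).2 ⟨hp, h⟩) (by simp [hlw])
    · exact absurd ((hmemup p).2 ⟨hp, h⟩) (by simp [hup])
  · obtain ⟨p1, hp1⟩ := List.exists_mem_of_ne_nil up hup
    obtain ⟨q1, hq1mem, hq1min⟩ :=
      Finset.exists_min_image up.toFinset Prod.fst ⟨p1, List.mem_toFinset.2 hp1⟩
    rw [List.mem_toFinset] at hq1mem
    refine ⟨q1.1 - 1, fun p hp => ⟨fun h => ?_, fun h => ?_⟩⟩
    · exact absurd ((hmemlw p).2 ⟨hp, h⟩) (by simp [hlw])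
    · have hle : q1.1 ≤ p.1 := hq1min p (List.mem_toFinset.2 ((hmemup p).2 ⟨hp, h⟩))
      linarith
  · obtain ⟨p0, hp0⟩ := List.exists_mem_of_ne_nil lw hlw
    obtain ⟨q0, hq0mem, hq0max⟩ :=
      Finset.exists_max_image lw.toFinset Prod.fst ⟨p0, List.mem_toFinset.2 hp0⟩
    rw [List.mem_toFinset] at hq0mem
    refine ⟨q0.1 + 1, fun p hp => ⟨fun h => ?_, fun h => ?_⟩⟩
    · have hle : p.1 ≤ q0.1 := hq0max p (List.mem_toFinset.2 ((hmemlw p).2 ⟨hp, h⟩))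
      linarith
    · exact absurd ((hmemup p).2 ⟨hp, h⟩) (by simp [hup])
  · obtain ⟨p0, hp0⟩ := List.exists_mem_of_ne_nil lw hlw
    obtain ⟨q0, hq0mem, hq0max⟩ :=
      Finset.exists_max_image lw.toFinset Prod.fst ⟨p0, List.mem_toFinset.2 hp0⟩
    rw [List.mem_toFinset] at hq0mem
    obtain ⟨p1, hp1⟩ := List.exists_mem_of_ne_nil up hup
    obtain ⟨q1, hq1mem, hq1min⟩ :=
      Finset.exists_min_image up.toFinset Prod.fst ⟨p1, List.mem_toFinset.2 hp1⟩
    rw [List.mem_toFinset] at hq1mem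
    have hq0l := (hmemlw q0).1 hq0mem
    have hq1l := (hmemup q1).1 hq1mem
    have hslt : sltB R q0.2 q1.2 := slt_of_slt_ple hR hq0l.2 hq1l.2.1
    have hle : q0.1 ≤ q1.1 := (hg q0 hq0l.1 q1 hq1l.1).2 hslt.1
    have hlt : q0.1 < q1.1 := by
      rcases lt_or_eq_of_le hle with h | h
      · exact h
      · exfalso
        have : pleB R q1.2 q0.2 = true := (hg q1 hq1l.1 q0 hq0l.1).1 (le_of_eq h.symm)
        exact hslt.2 (ple_antisymm hR hslt.1 this)
    refine ⟨(q0.1 + q1.1) / 2, fun p hp => ⟨fun h => ?_, fun h => ?_⟩⟩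
    · have hle' : p.1 ≤ q0.1 := hq0max p (List.mem_toFinset.2 ((hmemlw p).2 ⟨hp, h⟩))
      linarith
    · have hle' : q1.1 ≤ p.1 := hq1min p (List.mem_toFinset.2 ((hmemup p).2 ⟨hp, h⟩))
      linarith

lemma good_step (hR : LO R) {l : List (ℚ × ℚ)} (hg : good R l) (k : ℕ) :
    good R (step R k l) := by
  unfold step pureStep
  by_cases hk : k % 2 = 0
  · rw [if_pos hk]
    by_cases hm : d (k / 2) ∈ l.map Prod.fst
    · rw [if_pos hm]; exact hg
    · rw [if_neg hm]
      have hex := exists_forth hR hg hm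
      have hok : okF R l (d (k / 2)) (forthN R l (d (k / 2))) = true := by
        unfold forthN; rw [dif_pos hex]; exact Nat.find_spec hex
      have hokiff := okF_iff.1 hok
      intro p hp p' hp'
      rcases List.mem_cons.1 hp with rfl | hp <;> rcases List.mem_cons.1 hp' with h' | hp'
      · rw [h']; simp [ple_refl]
      · exact (hokiff p' hp').2
      · rw [h']; exact (hokiff p hp).1
      · exact hg p hp p' hp'
  · rw [if_neg hk]
    by_cases hm : d (k / 2) ∈ l.map Prod.snd
    · rw [if_pos hm]; exact hg
    · rw [if_neg hm]
      have hex := exists_back hR hg hm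
      have hok : okB R l (d (k / 2)) (backN R l (d (k / 2))) = true := by
        unfold backN; rw [dif_pos hex]; exact Nat.find_spec hex
      have hokiff := okB_iff.1 hok
      intro p hp p' hp'
      rcases List.mem_cons.1 hp with rfl | hp <;> rcases List.mem_cons.1 hp' with h' | hp'
      · rw [h']; simp [ple_refl]
      · exact (hokiff p' hp').2
      · rw [h']; exact (hokiff p hp).1
      · exact hg p hp p' hp'

lemma good_stage (hR : LO R) (k : ℕ) : good R (stage R k) := by
  induction k with
  | zero => intro p hp; exact absurd hp List.not_mem_nil
  | succ n ih => exact good_step hR ih n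

lemma mem_step {p : ℚ × ℚ} {l : List (ℚ × ℚ)} {k : ℕ} (h : p ∈ l) : p ∈ step R k l := by
  unfold step pureStep
  split <;> split
  · exact h
  · exact List.mem_cons_of_mem _ h
  · exact h
  · exact List.mem_cons_of_mem _ h

lemma mem_stage_mono {p : ℚ × ℚ} {k k' : ℕ} (hk : k ≤ k') (h : p ∈ stage R k) :
    p ∈ stage R k' := by
  induction k' with
  | zero => exact Nat.le_zero.1 hk ▸ h
  | succ n ih =>
    rcases Nat.eq_or_lt_of_le hk with rfl | h'
    · exact h
    · exact mem_step (ih (Nat.lt_succ_iff.1 h'))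

lemma fst_cover (R : Code) (m : ℕ) : d m ∈ (stage R (2 * m + 1)).map Prod.fst := by
  show d m ∈ (step R (2 * m) (stage R (2 * m))).map Prod.fst
  unfold step pureStep
  have h1 : (2 * m) % 2 = 0 := by omega
  have h2 : (2 * m) / 2 = m := by omega
  rw [if_pos h1, h2]
  by_cases hm : d m ∈ (stage R (2 * m)).map Prod.fst
  · rw [if_pos hm]; exact hm
  · rw [if_neg hm]; simp

lemma snd_cover (R : Code) (m : ℕ) : d m ∈ (stage R (2 * m + 2)).map Prod.snd := by
  show d m ∈ (step R (2 * m + 1) (stage R (2 * m + 1))).map Prod.snd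
  unfold step pureStep
  have h1 : ¬ (2 * m + 1) % 2 = 0 := by omega
  have h2 : (2 * m + 1) / 2 = m := by omega
  rw [if_neg h1, h2]
  by_cases hm : d m ∈ (stage R (2 * m + 1)).map Prod.snd
  · rw [if_pos hm]; exact hm
  · rw [if_neg hm]; simp

noncomputable def psi (R : Code) (q : ℚ) : ℚ :=
  (((stage R (2 * enc q + 1)).find? (fun p => p.1 == q)).map Prod.snd).getD q

noncomputable def psiinv (R : Code) (r : ℚ) : ℚ :=
  (((stage R (2 * enc r + 2)).find? (fun p => p.2 == r)).map Prod.fst).getD r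

lemma psi_eq (R : Code) (q : ℚ) :
    ∃ p, p ∈ stage R (2 * enc q + 1) ∧ p.1 = q ∧ psi R q = p.2 := by
  have hc := fst_cover R (enc q)
  rw [d_enc] at hc
  obtain ⟨p, hp, hpq⟩ := List.mem_map.1 hc
  have hsome : ((stage R (2 * enc q + 1)).find? (fun p => p.1 == q)).isSome := by
    rw [List.find?_isSome]; exact ⟨p, hp, by simp [hpq]⟩
  obtain ⟨p', hp'⟩ := Option.isSome_iff_exists.1 hsome
  exact ⟨p', List.mem_of_find?_eq_some hp', by simpa using List.find?_some hp',
    by simp [psi, hp']⟩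

lemma psiinv_eq (R : Code) (r : ℚ) :
    ∃ p, p ∈ stage R (2 * enc r + 2) ∧ p.2 = r ∧ psiinv R r = p.1 := by
  have hc := snd_cover R (enc r)
  rw [d_enc] at hc
  obtain ⟨p, hp, hpq⟩ := List.mem_map.1 hc
  have hsome : ((stage R (2 * enc r + 2)).find? (fun p => p.2 == r)).isSome := by
    rw [List.find?_isSome]; exact ⟨p, hp, by simp [hpq]⟩
  obtain ⟨p', hp'⟩ := Option.isSome_iff_exists.1 hsome
  exact ⟨p', List.mem_of_find?_eq_some hp', by simpa using List.find?_some hp',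
    by simp [psiinv, hp']⟩

lemma snd_unique (hR : LO R) {k k' : ℕ} {p p' : ℚ × ℚ} (h : p ∈ stage R k)
    (h' : p' ∈ stage R k') (hf : p.1 = p'.1) : p.2 = p'.2 := by
  have h1 := mem_stage_mono (le_max_left k k') h
  have h2 := mem_stage_mono (le_max_right k k') h'
  have hg := good_stage hR (max k k')
  exact ple_antisymm hR ((hg p h1 p' h2).1 (le_of_eq hf))
    ((hg p' h2 p h1).1 (le_of_eq hf.symm))

lemma fst_unique (hR : LO R) {k k' : ℕ} {p p' : ℚ × ℚ} (h : p ∈ stage R k)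
    (h' : p' ∈ stage R k') (hs : p.2 = p'.2) : p.1 = p'.1 := by
  have h1 := mem_stage_mono (le_max_left k k') h
  have h2 := mem_stage_mono (le_max_right k k') h'
  have hg := good_stage hR (max k k')
  refine le_antisymm ((hg p h1 p' h2).2 ?_) ((hg p' h2 p h1).2 ?_)
  · rw [hs]; exact ple_refl p'.2
  · rw [hs]; exact ple_refl p'.2

lemma psi_spec (hR : LO R) {k : ℕ} {q r : ℚ} (h : (q, r) ∈ stage R k) : psi R q = r := by
  obtain ⟨p, hp, hp1, hp2⟩ := psi_eq R q
  rw [hp2]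
  exact snd_unique hR hp h (by simp [hp1])

lemma psiinv_spec (hR : LO R) {k : ℕ} {q r : ℚ} (h : (q, r) ∈ stage R k) : psiinv R r = q := by
  obtain ⟨p, hp, hp1, hp2⟩ := psiinv_eq R r
  rw [hp2]
  exact fst_unique hR hp h (by simp [hp1])

lemma psi_mem (R : Code) (q : ℚ) : (q, psi R q) ∈ stage R (2 * enc q + 1) := by
  obtain ⟨p, hp, hp1, hp2⟩ := psi_eq R q
  have hpe : (q, psi R q) = p := Prod.ext hp1.symm hp2
  rw [hpe]; exact hp

lemma psiinv_mem (R : Code) (r : ℚ) : (psiinv R r, r) ∈ stage R (2 * enc r + 2) := by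
  obtain ⟨p, hp, hp1, hp2⟩ := psiinv_eq R r
  have hpe : (psiinv R r, r) = p := Prod.ext hp2 hp1.symm
  rw [hpe]; exact hp

lemma psiinv_psi (hR : LO R) (q : ℚ) : psiinv R (psi R q) = q :=
  psiinv_spec hR (psi_mem R q)

lemma psi_psiinv (hR : LO R) (r : ℚ) : psi R (psiinv R r) = r :=
  psi_spec hR (psiinv_mem R r)

lemma psi_le_iff (hR : LO R) (q q' : ℚ) :
    q ≤ q' ↔ pleB R (psi R q) (psi R q') = true := by
  have h1 := mem_stage_mono (le_max_left _ (2 * enc q' + 1)) (psi_mem R q)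
  have h2 := mem_stage_mono (le_max_right (2 * enc q + 1) _) (psi_mem R q')
  exact good_stage hR _ _ h1 _ h2

lemma psiinv_le_iff (hR : LO R) (r r' : ℚ) :
    pleB R r r' = true ↔ psiinv R r ≤ psiinv R r' := by
  have h1 := mem_stage_mono (le_max_left _ (2 * enc r' + 2)) (psiinv_mem R r)
  have h2 := mem_stage_mono (le_max_right (2 * enc r + 2) _) (psiinv_mem R r')
  exact (good_stage hR _ _ h1 _ h2).symm

noncomputable def fcore (R : Code) (q : ℚ) : ℚ := psiinv R (tau (psi R q))
noncomputable def gcore (R : Code) (q : ℚ) : ℚ := psiinv R (taui (psi R q))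

lemma gcore_fcore (hR : LO R) (q : ℚ) : gcore R (fcore R q) = q := by
  unfold fcore gcore
  rw [psi_psiinv hR, taui_tau, psiinv_psi hR]

lemma fcore_gcore (hR : LO R) (q : ℚ) : fcore R (gcore R q) = q := by
  unfold fcore gcore
  rw [psi_psiinv hR, tau_taui, psiinv_psi hR]

lemma fcore_le_iff (hR : LO R) (q q' : ℚ) : fcore R q ≤ fcore R q' ↔ q ≤ q' := by
  unfold fcore
  rw [← psiinv_le_iff hR, ple_tau_iff, ← psi_le_iff hR]

section Meas

def MF {β : Type*} (g : Code → β) : Prop := ∀ b : β, MeasurableSet {R : Code | g R = b}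

lemma mf_const {β : Type*} (b0 : β) : MF (fun _ : Code => b0) := by
  intro b
  by_cases h : b0 = b
  · have : {R : Code | b0 = b} = Set.univ := by ext R; simp [h]
    rw [this]; exact MeasurableSet.univ
  · have : {R : Code | b0 = b} = ∅ := by ext R; simp [h]
    rw [this]; exact MeasurableSet.empty

lemma mf_eval (ij : ℕ × ℕ) : MF (fun R : Code => R ij) := by
  intro b
  have h : {R : Code | R ij = b} = (fun R : Code => R ij) ⁻¹' {b} := rfl
  rw [h]
  exact measurable_pi_apply ij (measurableSet_singleton b)

lemma mf_bind {β γ : Type*} [Countable β] {g : Code → β} {h : β → Code → γ}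
    (hg : MF g) (hh : ∀ b, MF (h b)) : MF (fun R => h (g R) R) := by
  intro c
  have heq : {R : Code | h (g R) R = c} = ⋃ b : β, ({R | g R = b} ∩ {R | h b R = c}) := by
    ext R
    simp only [Set.mem_setOf_eq, Set.mem_iUnion, Set.mem_inter_iff]
    constructor
    · intro hc; exact ⟨g R, rfl, hc⟩
    · rintro ⟨b, rfl, hc⟩; exact hc
  rw [heq]
  exact MeasurableSet.iUnion fun b => (hg b).inter (hh b c)

lemma mf_comp {β γ : Type*} [Countable β] {g : Code → β} (F : β → γ) (hg : MF g) :
    MF (fun R => F (g R)) :=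
  mf_bind hg (fun b => mf_const (F b))

lemma mf_band {x y : Code → Bool} (hx : MF x) (hy : MF y) : MF (fun R => x R && y R) :=
  mf_bind hx (fun b => mf_comp (fun c => b && c) hy)

lemma mf_pleB (q q' : ℚ) : MF (fun R => pleB R q q') := by
  have h : (fun R : Code => pleB R q q') = fun R =>
      (fun b : Bool => if (e q).1 = (e q').1 then decide ((e q).2 ≤ (e q').2) else b)
        (R ((e q).1, (e q').1)) := rfl
  rw [h]
  exact mf_comp _ (mf_eval _)

lemma mf_okF (l : List (ℚ × ℚ)) (a : ℚ) (n : ℕ) : MF (fun R => okF R l a n) := by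
  induction l with
  | nil => exact mf_const true
  | cons p l ih =>
    have h : (fun R => okF R (p :: l) a n) = fun R =>
        (((decide (p.1 ≤ a) == pleB R p.2 (d n)) &&
          (decide (a ≤ p.1) == pleB R (d n) p.2)) && okF R l a n) := by
      funext R; simp [okF]
    rw [h]
    exact mf_band (mf_band (mf_comp (fun x => decide (p.1 ≤ a) == x) (mf_pleB _ _))
      (mf_comp (fun x => decide (a ≤ p.1) == x) (mf_pleB _ _))) ih

lemma mf_okB (l : List (ℚ × ℚ)) (b : ℚ) (n : ℕ) : MF (fun R => okB R l b n) := by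
  induction l with
  | nil => exact mf_const true
  | cons p l ih =>
    have h : (fun R => okB R (p :: l) b n) = fun R =>
        (((decide (p.1 ≤ d n) == pleB R p.2 b) &&
          (decide (d n ≤ p.1) == pleB R b p.2)) && okB R l b n) := by
      funext R; simp [okB]
    rw [h]
    exact mf_band (mf_band (mf_comp (fun x => decide (p.1 ≤ d n) == x) (mf_pleB _ _))
      (mf_comp (fun x => decide (d n ≤ p.1) == x) (mf_pleB _ _))) ih

lemma forthN_eq_iff {R : Code} {l : List (ℚ × ℚ)} {a : ℚ} {n : ℕ} : forthN R l a = n ↔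
    ((okF R l a n = true ∧ ∀ m < n, ¬ okF R l a m = true) ∨
     (n = 0 ∧ ∀ m, ¬ okF R l a m = true)) := by
  unfold forthN
  by_cases h : ∃ m, okF R l a m = true
  · rw [dif_pos h]
    constructor
    · rintro rfl
      exact Or.inl ⟨Nat.find_spec h, fun m hm => Nat.find_min h hm⟩
    · rintro (⟨h1, h2⟩ | ⟨rfl, h2⟩)
      · exact (Nat.find_eq_iff h).2 ⟨h1, h2⟩
      · exact absurd (Nat.find_spec h) (h2 _)
  · rw [dif_neg h]
    push_neg at h
    constructor
    · rintro rfl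
      exact Or.inr ⟨rfl, fun m => by simp [h m]⟩
    · rintro (⟨h1, _⟩ | ⟨rfl, _⟩)
      · exact absurd h1 (by simp [h n])
      · rfl

lemma backN_eq_iff {R : Code} {l : List (ℚ × ℚ)} {b : ℚ} {n : ℕ} : backN R l b = n ↔
    ((okB R l b n = true ∧ ∀ m < n, ¬ okB R l b m = true) ∨
     (n = 0 ∧ ∀ m, ¬ okB R l b m = true)) := by
  unfold backN
  by_cases h : ∃ m, okB R l b m = true
  · rw [dif_pos h]
    constructor
    · rintro rfl
      exact Or.inl ⟨Nat.find_spec h, fun m hm => Nat.find_min h hm⟩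
    · rintro (⟨h1, h2⟩ | ⟨rfl, h2⟩)
      · exact (Nat.find_eq_iff h).2 ⟨h1, h2⟩
      · exact absurd (Nat.find_spec h) (h2 _)
  · rw [dif_neg h]
    push_neg at h
    constructor
    · rintro rfl
      exact Or.inr ⟨rfl, fun m => by simp [h m]⟩
    · rintro (⟨h1, _⟩ | ⟨rfl, _⟩)
      · exact absurd h1 (by simp [h n])
      · rfl

lemma mf_forthN (l : List (ℚ × ℚ)) (a : ℚ) : MF (fun R => forthN R l a) := by
  intro n
  by_cases hn : n = 0
  · subst hn
    have heq : {R : Code | forthN R l a = 0} =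
        {R | okF R l a 0 = true} ∪ ⋂ m, {R | okF R l a m = false} := by
      ext R
      simp only [Set.mem_setOf_eq, Set.mem_union, Set.mem_iInter, forthN_eq_iff,
        Bool.not_eq_true]
      constructor
      · rintro (⟨h1, _⟩ | ⟨_, h2⟩)
        · exact Or.inl h1
        · exact Or.inr h2
      · rintro (h1 | h2)
        · exact Or.inl ⟨h1, fun m hm => absurd hm (Nat.not_lt_zero m)⟩
        · exact Or.inr ⟨by trivial, h2⟩
    rw [heq]
    exact (mf_okF l a 0 true).union
      (MeasurableSet.iInter fun m => mf_okF l a m false)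
  · have heq : {R : Code | forthN R l a = n} =
        {R | okF R l a n = true} ∩ ⋂ m, ⋂ _ : m < n, {R | okF R l a m = false} := by
      ext R
      simp only [Set.mem_setOf_eq, Set.mem_inter_iff, Set.mem_iInter, forthN_eq_iff,
        Bool.not_eq_true]
      constructor
      · rintro (⟨h1, h2⟩ | ⟨h0, _⟩)
        · exact ⟨h1, h2⟩
        · exact absurd h0 hn
      · rintro ⟨h1, h2⟩
        exact Or.inl ⟨h1, h2⟩
    rw [heq]
    exact (mf_okF l a n true).inter
      (MeasurableSet.iInter fun m => MeasurableSet.iInter fun _ => mf_okF l a m false)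

lemma mf_backN (l : List (ℚ × ℚ)) (b : ℚ) : MF (fun R => backN R l b) := by
  intro n
  by_cases hn : n = 0
  · subst hn
    have heq : {R : Code | backN R l b = 0} =
        {R | okB R l b 0 = true} ∪ ⋂ m, {R | okB R l b m = false} := by
      ext R
      simp only [Set.mem_setOf_eq, Set.mem_union, Set.mem_iInter, backN_eq_iff,
        Bool.not_eq_true]
      constructor
      · rintro (⟨h1, _⟩ | ⟨_, h2⟩)
        · exact Or.inl h1
        · exact Or.inr h2
      · rintro (h1 | h2)
        · exact Or.inl ⟨h1, fun m hm => absurd hm (Nat.not_lt_zero m)⟩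
        · exact Or.inr ⟨by trivial, h2⟩
    rw [heq]
    exact (mf_okB l b 0 true).union
      (MeasurableSet.iInter fun m => mf_okB l b m false)
  · have heq : {R : Code | backN R l b = n} =
        {R | okB R l b n = true} ∩ ⋂ m, ⋂ _ : m < n, {R | okB R l b m = false} := by
      ext R
      simp only [Set.mem_setOf_eq, Set.mem_inter_iff, Set.mem_iInter, backN_eq_iff,
        Bool.not_eq_true]
      constructor
      · rintro (⟨h1, h2⟩ | ⟨h0, _⟩)
        · exact ⟨h1, h2⟩
        · exact absurd h0 hn
      · rintro ⟨h1, h2⟩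
        exact Or.inl ⟨h1, h2⟩
    rw [heq]
    exact (mf_okB l b n true).inter
      (MeasurableSet.iInter fun m => MeasurableSet.iInter fun _ => mf_okB l b m false)

lemma mf_stage (k : ℕ) : MF (fun R => stage R k) := by
  induction k with
  | zero => exact mf_const []
  | succ n ih =>
    have h : (fun R => stage R (n + 1)) = fun R =>
        (fun l (R' : Code) =>
          pureStep n l (forthN R' l (d (n / 2))) (backN R' l (d (n / 2)))) (stage R n) R := rfl
    rw [h]
    exact mf_bind ih (fun l => mf_bind (mf_forthN l (d (n / 2)))
      (fun i => mf_comp (fun j => pureStep n l i j) (mf_backN l (d (n / 2)))))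

lemma mf_psi (q : ℚ) : MF (fun R => psi R q) := by
  unfold psi
  exact mf_comp (fun l => ((l.find? (fun p => p.1 == q)).map Prod.snd).getD q)
    (mf_stage (2 * enc q + 1))

lemma mf_psiinv (r : ℚ) : MF (fun R => psiinv R r) := by
  unfold psiinv
  exact mf_comp (fun l => ((l.find? (fun p => p.2 == r)).map Prod.fst).getD r)
    (mf_stage (2 * enc r + 2))

lemma mf_fcore (q : ℚ) : MF (fun R => fcore R q) := by
  unfold fcore
  exact mf_bind (h := fun s R => psiinv R (tau s)) (mf_psi q) (fun s => mf_psiinv (tau s))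

lemma lo_of_pointwise {R : Code}
    (h : ∀ a b c : ℕ, (R (a,b) = true ∨ R (b,a) = true) ∧
      (R (a,b) = true → R (b,a) = true → a = b) ∧
      (R (a,b) = true → R (b,c) = true → R (a,c) = true)) : LO R := by
  show IsLinearOrder ℕ (fun m n => R (m, n) = true)
  haveI : IsRefl ℕ (fun m n => R (m, n) = true) := ⟨fun a => Or.elim (h a a a).1 id id⟩
  haveI : IsTrans ℕ (fun m n => R (m, n) = true) :=
    ⟨fun a b c hab hbc => (h a b c).2.2 hab hbc⟩
  haveI : IsAntisymm ℕ (fun m n => R (m, n) = true) :=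
    ⟨fun a b hab hba => (h a b b).2.1 hab hba⟩
  haveI : IsTotal ℕ (fun m n => R (m, n) = true) := ⟨fun a b => (h a b b).1⟩
  exact { }

lemma measurableSet_LO : MeasurableSet {R : Code | LO R} := by
  have heq : {R : Code | LO R} = ⋂ (a : ℕ), ⋂ (b : ℕ), ⋂ (c : ℕ),
      {R : Code | (((R (a,b) || R (b,a)) && ((!(R (a,b) && R (b,a))) || decide (a = b))) &&
        ((!(R (a,b) && R (b,c))) || R (a,c))) = true} := by
    ext R
    simp only [Set.mem_iInter, Set.mem_setOf_eq, Bool.and_eq_true, Bool.or_eq_true,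
      Bool.not_eq_true', Bool.and_eq_false_iff, decide_eq_true_eq]
    constructor
    · intro hR a b c
      refine ⟨⟨Rtotal hR a b, ?_⟩, ?_⟩
      · by_cases h1 : R (a,b) = true
        · by_cases h2 : R (b,a) = true
          · exact Or.inr (Rantisymm hR h1 h2)
          · exact Or.inl (Or.inr (by simpa using h2))
        · exact Or.inl (Or.inl (by simpa using h1))
      · by_cases h1 : R (a,b) = true
        · by_cases h2 : R (b,c) = true
          · exact Or.inr (Rtrans hR h1 h2)
          · exact Or.inl (Or.inr (by simpa using h2))
        · exact Or.inl (Or.inl (by simpa using h1))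
    · intro h
      apply lo_of_pointwise
      intro a b c
      obtain ⟨⟨ht, ha⟩, htr⟩ := h a b c
      refine ⟨ht, fun h1 h2 => ?_, fun h1 h2 => ?_⟩
      · rcases ha with (h'|h')|h'
        · rw [h1] at h'; cases h'
        · rw [h2] at h'; cases h'
        · exact h'
      · rcases htr with (h'|h')|h'
        · rw [h1] at h'; cases h'
        · rw [h2] at h'; cases h'
        · exact h'
  rw [heq]
  refine MeasurableSet.iInter fun a => MeasurableSet.iInter fun b =>
    MeasurableSet.iInter fun c => ?_
  have hg : MF (fun R : Code => (((R (a,b) || R (b,a)) &&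
      ((!(R (a,b) && R (b,a))) || decide (a = b))) &&
      ((!(R (a,b) && R (b,c))) || R (a,c)))) :=
    mf_bind (mf_eval (a,b)) fun x => mf_bind (mf_eval (b,a)) fun y =>
      mf_bind (mf_eval (b,c)) fun z =>
        mf_comp (fun w => ((x || y) && ((!(x && y)) || decide (a = b))) && ((!(x && z)) || w))
          (mf_eval (a,c))
  exact hg true

open Classical in
noncomputable def F : Code → ℚ → ℚ := fun R => if LO R then fcore R else id

lemma F_of_lo {R : Code} (hR : LO R) : F R = fcore R := by
  unfold F; rw [if_pos hR]

lemma measurable_F : Measurable F := by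
  apply measurable_pi_lambda
  intro q
  apply measurable_to_countable'
  intro r
  have heq : (fun R => F R q) ⁻¹' {r} =
      ({R : Code | LO R} ∩ {R | fcore R q = r}) ∪
      ({R : Code | LO R}ᶜ ∩ {R : Code | q = r}) := by
    ext R
    by_cases h : LO R <;> simp [F, h]
  rw [heq]
  refine MeasurableSet.union (measurableSet_LO.inter (mf_fcore q r)) ?_
  refine MeasurableSet.compl measurableSet_LO |>.inter ?_
  by_cases h : q = r
  · have : {R : Code | q = r} = Set.univ := by ext R; simp [h]
    rw [this]; exact MeasurableSet.univ
  · have : {R : Code | q = r} = ∅ := by ext R; simp [h]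
    rw [this]; exact MeasurableSet.empty

end Meas



lemma pleB_iff {R : Code} {x y : ℚ} : pleB R x y = true ↔
    (((e x).1 = (e y).1 ∧ (e x).2 ≤ (e y).2) ∨
     ((e x).1 ≠ (e y).1 ∧ R ((e x).1, (e y).1) = true)) := by
  unfold pleB
  by_cases h : (e x).1 = (e y).1
  · rw [if_pos h]; simp [h]
  · rw [if_neg h]; simp [h]

lemma fcore_eq (R : Code) (q : ℚ) : fcore R q = psiinv R (tau (psi R q)) := rfl

attribute [irreducible] fcore gcore psi psiinv stage pleB

noncomputable def phiIso (hR : LO R) : ℚ ≃o ℚ :=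
  { toFun := fcore R
    invFun := gcore R
    left_inv := gcore_fcore hR
    right_inv := fcore_gcore hR
    map_rel_iff' := by intro a b; exact fcore_le_iff hR a b }



section Main

variable {R S : Code}

lemma ple_fst (hS : LO S) {x y : ℚ} (h : pleB S x y = true) :
    S ((e x).1, (e y).1) = true := by
  rcases pleB_iff.1 h with ⟨h1, _⟩ | ⟨_, h2⟩
  · rw [h1]; exact Rrefl hS _
  · exact h2

lemma ple_pt_of_ne {n n' : ℕ} (hne : n ≠ n') (h : R (n, n') = true) (b b' : ℚ) :
    pleB R (pt n b) (pt n' b') = true := by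
  refine pleB_iff.2 (Or.inr ?_)
  simp only [e_pt]
  exact ⟨hne, h⟩

lemma tau_iter_pt (k : ℕ) (n : ℕ) (b : ℚ) : tau^[k] (pt n b) = pt n (b + k) := by
  induction k with
  | zero => simp
  | succ m ih =>
    rw [Function.iterate_succ_apply', ih]
    show e.symm ((e (pt n (b + m))).1, (e (pt n (b + m))).2 + 1) = pt n (b + (m + 1 : ℕ))
    rw [e_pt]
    unfold pt
    have h : b + (m : ℚ) + 1 = b + ((m + 1 : ℕ) : ℚ) := by push_cast; ring
    rw [h]

lemma taui_iter_pt (k : ℕ) (n : ℕ) (b : ℚ) : taui^[k] (pt n b) = pt n (b - k) := by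
  induction k with
  | zero => simp
  | succ m ih =>
    rw [Function.iterate_succ_apply', ih]
    show e.symm ((e (pt n (b - m))).1, (e (pt n (b - m))).2 - 1) = pt n (b - (m + 1 : ℕ))
    rw [e_pt]
    unfold pt
    have h : b - (m : ℚ) - 1 = b - ((m + 1 : ℕ) : ℚ) := by push_cast; ring
    rw [h]

lemma fst_tau_iter (k : ℕ) (x : ℚ) : (e (tau^[k] x)).1 = (e x).1 := by
  induction k with
  | zero => rfl
  | succ m ih => rw [Function.iterate_succ_apply', e_tau, ih]

lemma fst_taui_iter (k : ℕ) (x : ℚ) : (e (taui^[k] x)).1 = (e x).1 := by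
  induction k with
  | zero => rfl
  | succ m ih => rw [Function.iterate_succ_apply', e_taui, ih]

lemma g_taui {g : ℚ → ℚ} (htau : ∀ r, g (tau r) = tau (g r)) (r : ℚ) :
    g (taui r) = taui (g r) := by
  have h := htau (taui r)
  rw [tau_taui] at h
  rw [h, taui_tau]

lemma g_tau_iter {g : ℚ → ℚ} (htau : ∀ r, g (tau r) = tau (g r)) (k : ℕ) (r : ℚ) :
    g (tau^[k] r) = tau^[k] (g r) := by
  induction k with
  | zero => rfl
  | succ m ih => rw [Function.iterate_succ_apply', Function.iterate_succ_apply', htau, ih]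

lemma g_taui_iter {g : ℚ → ℚ} (htau : ∀ r, g (tau r) = tau (g r)) (k : ℕ) (r : ℚ) :
    g (taui^[k] r) = taui^[k] (g r) := by
  induction k with
  | zero => rfl
  | succ m ih =>
    rw [Function.iterate_succ_apply', Function.iterate_succ_apply', g_taui htau, ih]

lemma key_fst (hS : LO S) {g : ℚ → ℚ}
    (hmono : ∀ x y, pleB R x y = true → pleB S (g x) (g y) = true)
    (htau : ∀ r, g (tau r) = tau (g r)) (n : ℕ) (b : ℚ) :
    (e (g (pt n b))).1 = (e (g (pt n 0))).1 := by
  obtain ⟨k, hk⟩ := exists_nat_ge b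
  obtain ⟨k', hk'⟩ := exists_nat_ge (-b)
  have h1 : pleB R (pt n b) (pt n (0 + k)) = true := by
    rw [ple_pt_iff]; simpa using hk
  have h2 : pleB R (pt n (0 - k')) (pt n b) = true := by
    rw [ple_pt_iff]; linarith
  have e1 : g (pt n (0 + k)) = tau^[k] (g (pt n 0)) := by
    rw [← tau_iter_pt, g_tau_iter htau]
  have e2 : g (pt n (0 - k')) = taui^[k'] (g (pt n 0)) := by
    rw [← taui_iter_pt, g_taui_iter htau]
  have s1 : S ((e (g (pt n b))).1, (e (g (pt n 0))).1) = true := by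
    have h := ple_fst hS (hmono _ _ h1)
    rwa [e1, fst_tau_iter] at h
  have s2 : S ((e (g (pt n 0))).1, (e (g (pt n b))).1) = true := by
    have h := ple_fst hS (hmono _ _ h2)
    rwa [e2, fst_taui_iter] at h
  exact Rantisymm hS s1 s2

lemma relIso_of_gam (hR : LO R) (hS : LO S) (g g' : ℚ → ℚ)
    (hgg' : ∀ r, g' (g r) = r) (hg'g : ∀ r, g (g' r) = r)
    (hmono : ∀ x y, pleB R x y = true → pleB S (g x) (g y) = true)
    (hmono' : ∀ x y, pleB S x y = true → pleB R (g' x) (g' y) = true)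
    (htau : ∀ r, g (tau r) = tau (g r)) (htau' : ∀ r, g' (tau r) = tau (g' r)) :
    Nonempty ((fun m n : ℕ => R (m, n) = true) ≃r (fun m n : ℕ => S (m, n) = true)) := by
  set Φ := fun n : ℕ => (e (g (pt n 0))).1 with hPhi
  set Φ' := fun m : ℕ => (e (g' (pt m 0))).1 with hPhi'
  have hkey : ∀ (n : ℕ) (b : ℚ), (e (g (pt n b))).1 = Φ n :=
    fun n b => key_fst hS hmono htau n b
  have hkey' : ∀ (m : ℕ) (b : ℚ), (e (g' (pt m b))).1 = Φ' m :=
    fun m b => key_fst hR hmono' htau' m b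
  have hself : ∀ x : ℚ, pt (e x).1 (e x).2 = x := fun x => by
    show e.symm ((e x).1, (e x).2) = x
    rw [Prod.mk.eta, e.symm_apply_apply]
  have hleft : ∀ n, Φ' (Φ n) = n := by
    intro n
    have h1 : pt (Φ n) ((e (g (pt n 0))).2) = g (pt n 0) := by
      rw [hPhi]; exact hself _
    have h2 := hkey' (Φ n) ((e (g (pt n 0))).2)
    rw [h1, hgg', e_pt] at h2
    exact h2.symm
  have hright : ∀ m, Φ (Φ' m) = m := by
    intro m
    have h1 : pt (Φ' m) ((e (g' (pt m 0))).2) = g' (pt m 0) := by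
      rw [hPhi']; exact hself _
    have h2 := hkey (Φ' m) ((e (g' (pt m 0))).2)
    rw [h1, hg'g, e_pt] at h2
    exact h2.symm
  have hrel : ∀ n n', R (n, n') = true → S (Φ n, Φ n') = true := by
    intro n n' h
    rcases eq_or_ne n n' with rfl | hne
    · exact Rrefl hS _
    · have hp := hmono _ _ (ple_pt_of_ne hne h 0 0)
      rcases pleB_iff.1 hp with ⟨h1, _⟩ | ⟨_, h2⟩
      · rw [hkey n 0, hkey n' 0] at h1
        rw [h1]; exact Rrefl hS _
      · rwa [hkey n 0, hkey n' 0] at h2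
  have hrel' : ∀ m m', S (m, m') = true → R (Φ' m, Φ' m') = true := by
    intro m m' h
    rcases eq_or_ne m m' with rfl | hne
    · exact Rrefl hR _
    · have hp := hmono' _ _ (ple_pt_of_ne hne h 0 0)
      rcases pleB_iff.1 hp with ⟨h1, _⟩ | ⟨_, h2⟩
      · rw [hkey' m 0, hkey' m' 0] at h1
        rw [h1]; exact Rrefl hR _
      · rwa [hkey' m 0, hkey' m' 0] at h2
  refine ⟨⟨⟨Φ, Φ', hleft, hright⟩, ?_⟩⟩
  intro a b
  constructor
  · intro h
    have h2 := hrel' _ _ h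
    rw [← hleft a, ← hleft b]
    exact h2
  · exact hrel a b

lemma forward_conj (hR : LO R) (hS : LO S)
    (φ : (fun m n : ℕ => R (m, n) = true) ≃r (fun m n : ℕ => S (m, n) = true)) :
    ∃ β : ℚ ≃o ℚ, ∀ q, β (fcore R q) = fcore S (β q) := by
  classical
  set g : ℚ → ℚ := fun x => pt (φ (e x).1) (e x).2 with hg
  set g' : ℚ → ℚ := fun x => pt (φ.symm (e x).1) (e x).2 with hg'
  have hself : ∀ x : ℚ, pt (e x).1 (e x).2 = x := fun x => by
    show e.symm ((e x).1, (e x).2) = x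
    rw [Prod.mk.eta, e.symm_apply_apply]
  have hg'g : ∀ x, g' (g x) = x := by
    intro x
    simp only [hg, hg', e_pt]
    rw [RelIso.symm_apply_apply]
    exact hself x
  have hgg' : ∀ x, g (g' x) = x := by
    intro x
    simp only [hg, hg', e_pt]
    rw [RelIso.apply_symm_apply]
    exact hself x
  have hmono : ∀ x y, pleB R x y = true → pleB S (g x) (g y) = true := by
    intro x y h
    rcases pleB_iff.1 h with ⟨h1, h2⟩ | ⟨h1, h2⟩
    · refine pleB_iff.2 (Or.inl ?_)
      simp only [hg, e_pt]
      exact ⟨by rw [h1], h2⟩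
    · refine pleB_iff.2 (Or.inr ?_)
      simp only [hg, e_pt]
      exact ⟨fun hh => h1 (φ.injective hh), φ.map_rel_iff.2 h2⟩
  have hmono' : ∀ x y, pleB S x y = true → pleB R (g' x) (g' y) = true := by
    intro x y h
    rcases pleB_iff.1 h with ⟨h1, h2⟩ | ⟨h1, h2⟩
    · refine pleB_iff.2 (Or.inl ?_)
      rw [hg']; simp only [e_pt]
      exact ⟨by rw [h1], h2⟩
    · refine pleB_iff.2 (Or.inr ?_)
      rw [hg']; simp only [e_pt]
      exact ⟨fun hh => h1 (φ.symm.injective hh), φ.symm.map_rel_iff.2 h2⟩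
  have htau : ∀ x, g (tau x) = tau (g x) := by
    intro x
    simp only [hg]
    show pt (φ (e (tau x)).1) (e (tau x)).2 = tau (pt (φ (e x).1) (e x).2)
    rw [e_tau]
    show pt (φ (e x).1) ((e x).2 + 1) =
      e.symm ((e (pt (φ (e x).1) (e x).2)).1, (e (pt (φ (e x).1) (e x).2)).2 + 1)
    rw [e_pt]
    rfl
  have hiff : ∀ x y, pleB S (g x) (g y) = true ↔ pleB R x y = true := by
    intro x y
    refine ⟨fun h => ?_, hmono x y⟩
    have h2 := hmono' _ _ h
    rwa [hg'g, hg'g] at h2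
  refine ⟨{ toFun := fun q => psiinv S (g (psi R q)),
            invFun := fun q => psiinv R (g' (psi S q)),
            left_inv := ?_, right_inv := ?_, map_rel_iff' := ?_ }, ?_⟩
  · intro q
    show psiinv R (g' (psi S (psiinv S (g (psi R q))))) = q
    rw [psi_psiinv hS, hg'g, psiinv_psi hR]
  · intro q
    show psiinv S (g (psi R (psiinv R (g' (psi S q))))) = q
    rw [psi_psiinv hR, hgg', psiinv_psi hS]
  · intro a b
    show psiinv S (g (psi R a)) ≤ psiinv S (g (psi R b)) ↔ a ≤ b
    rw [← psiinv_le_iff hS, hiff]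
    exact (psi_le_iff hR a b).symm
  · intro q
    show psiinv S (g (psi R (fcore R q))) = fcore S (psiinv S (g (psi R q)))
    rw [fcore_eq, fcore_eq, psi_psiinv hR, htau, psi_psiinv hS]

lemma backward_conj (hR : LO R) (hS : LO S) (β : ℚ ≃o ℚ)
    (hcomm : ∀ q, β (fcore R q) = fcore S (β q)) :
    Nonempty ((fun m n : ℕ => R (m, n) = true) ≃r (fun m n : ℕ => S (m, n) = true)) := by
  set g : ℚ → ℚ := fun r => psi S (β (psiinv R r)) with hg
  set g' : ℚ → ℚ := fun r => psi R (β.symm (psiinv S r)) with hg'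
  have hcomm' : ∀ q, β.symm (fcore S q) = fcore R (β.symm q) := by
    intro q
    have h := hcomm (β.symm q)
    rw [OrderIso.apply_symm_apply] at h
    rw [← h, OrderIso.symm_apply_apply]
  apply relIso_of_gam hR hS g g'
  · intro r
    simp only [hg, hg']
    rw [psiinv_psi hS, OrderIso.symm_apply_apply, psi_psiinv hR]
  · intro r
    simp only [hg, hg']
    rw [psiinv_psi hR, OrderIso.apply_symm_apply, psi_psiinv hS]
  · intro x y h
    simp only [hg]
    rw [← psi_le_iff hS, OrderIso.le_iff_le]
    exact (psiinv_le_iff hR x y).1 h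
  · intro x y h
    simp only [hg']
    rw [← psi_le_iff hR, OrderIso.le_iff_le]
    exact (psiinv_le_iff hS x y).1 h
  · intro r
    have h := hcomm (psiinv R r)
    rw [fcore_eq, fcore_eq, psi_psiinv hR] at h
    simp only [hg]
    show psi S (β (psiinv R (tau r))) = tau (psi S (β (psiinv R r)))
    rw [h, psi_psiinv hS]
  · intro r
    have h := hcomm' (psiinv S r)
    rw [fcore_eq, fcore_eq, psi_psiinv hS] at h
    simp only [hg']
    show psi R (β.symm (psiinv S (tau r))) = tau (psi R (β.symm (psiinv S r)))
    rw [h, psi_psiinv hR]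

end Main

end Stmt9

/-- The isomorphism relation on countable linear orders (coded as elements
of the Polish space `(ℕ × ℕ) → Bool`) is Borel reducible to the conjugacy relation on
`Aut(ℚ)` (automorphisms coded as elements of the Polish space `ℚ → ℚ`). -/
theorem stmt_9 :
    ∃ f : ((ℕ × ℕ) → Bool) → (ℚ → ℚ),
      Measurable f ∧
      (∀ R : (ℕ × ℕ) → Bool, IsLinearOrder ℕ (fun m n => R (m, n) = true) →
        ∃ φ : ℚ ≃o ℚ, ⇑φ = f R) ∧
      (∀ R S : (ℕ × ℕ) → Bool,
        IsLinearOrder ℕ (fun m n => R (m, n) = true) →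
        IsLinearOrder ℕ (fun m n => S (m, n) = true) →
        (Nonempty ((fun m n : ℕ => R (m, n) = true) ≃r (fun m n : ℕ => S (m, n) = true)) ↔
          ∃ β : ℚ ≃o ℚ, ∀ q : ℚ, β (f R q) = f S (β q))) := by
  refine ⟨Stmt9.F, Stmt9.measurable_F, ?_, ?_⟩
  · intro R hR
    exact ⟨Stmt9.phiIso hR, by rw [Stmt9.F_of_lo hR]; rfl⟩
  · intro R S hR hS
    constructor
    · rintro ⟨φ⟩
      obtain ⟨β, hβ⟩ := Stmt9.forward_conj hR hS φ
      refine ⟨β, fun q => ?_⟩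
      rw [Stmt9.F_of_lo hR, Stmt9.F_of_lo hS]
      exact hβ q
    · rintro ⟨β, hβ⟩
      apply Stmt9.backward_conj hR hS β
      intro q
      have h := hβ q
      rwa [Stmt9.F_of_lo hR, Stmt9.F_of_lo hS] at h
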